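/- Every complex root α of an SSNN polynomial of degree 4 satisfies -2 ≤ Re(α) ≤ 1. -/

import Mathlib

/-- Polynomial binomial coefficient `binom(x, k) = x(x-1)⋯(x-k+1)/k!` in a complex variable. -/
noncomputable def cbinom (x : ℂ) (k : ℕ) : ℂ :=
  (∏ j ∈ Finset.range k, (x - (j : ℂ))) / (k.factorial : ℂ)

private lemma ssnn_lB0 (x y : ℝ) (hx : (3:ℝ)/2 ≤ x) :
    0 < 4*x^8 + 16*x^6*y^2 + 100*x^6 + 24*x^4*y^4 + 100*x^4*y^2 + (647/2)*x^4 + 16*x^2*y^6 +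
      (-100)*x^2*y^4 + 467*x^2*y^2 + (45/4)*x^2 + 4*y^8 + (-100)*y^6 + (647/2)*y^4 +
      ((-45)/4)*y^2 + ((-1575)/64) := by
  have ht : (0:ℝ) ≤ x - 3/2 := by linarith
  have hs : (0:ℝ) ≤ y^2 := sq_nonneg y
  linarith [sq_nonneg (y^4 - 8*y^2 - 9),
    pow_nonneg ht 8, pow_nonneg ht 7, pow_nonneg ht 6, pow_nonneg ht 5, pow_nonneg ht 4,
    pow_nonneg ht 3, pow_nonneg ht 2, ht, hs, pow_nonneg hs 2,
    mul_nonneg (pow_nonneg ht 6) hs, mul_nonneg (pow_nonneg ht 5) hs,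
    mul_nonneg (pow_nonneg ht 4) (pow_nonneg hs 2), mul_nonneg (pow_nonneg ht 4) hs,
    mul_nonneg (pow_nonneg ht 3) (pow_nonneg hs 2), mul_nonneg (pow_nonneg ht 3) hs,
    mul_nonneg (pow_nonneg ht 2) (pow_nonneg hs 3), mul_nonneg (pow_nonneg ht 2) (pow_nonneg hs 2),
    mul_nonneg (pow_nonneg ht 2) hs, mul_nonneg ht (pow_nonneg hs 3),
    mul_nonneg ht (pow_nonneg hs 2), mul_nonneg ht hs]

private lemma ssnn_lB1 (x y : ℝ) (hx : (3:ℝ)/2 ≤ x) :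
    0 < 4*x^8 + 16*x^6*y^2 + 28*x^6 + 24*x^4*y^4 + 28*x^4*y^2 + (83/2)*x^4 + 16*x^2*y^6 +
      (-28)*x^2*y^4 + 143*x^2*y^2 + ((-105)/4)*x^2 + 4*y^8 + (-28)*y^6 + (83/2)*y^4 +
      (105/4)*y^2 + (225/64) := by
  have ht : (0:ℝ) ≤ x - 3/2 := by linarith
  have hs : (0:ℝ) ≤ y^2 := sq_nonneg y
  linarith [pow_nonneg hs 4, pow_nonneg hs 3,
    pow_nonneg ht 8, pow_nonneg ht 7, pow_nonneg ht 6, pow_nonneg ht 5, pow_nonneg ht 4,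
    pow_nonneg ht 3, pow_nonneg ht 2, ht, hs, pow_nonneg hs 2,
    mul_nonneg (pow_nonneg ht 6) hs, mul_nonneg (pow_nonneg ht 5) hs,
    mul_nonneg (pow_nonneg ht 4) (pow_nonneg hs 2), mul_nonneg (pow_nonneg ht 4) hs,
    mul_nonneg (pow_nonneg ht 3) (pow_nonneg hs 2), mul_nonneg (pow_nonneg ht 3) hs,
    mul_nonneg (pow_nonneg ht 2) (pow_nonneg hs 3), mul_nonneg (pow_nonneg ht 2) (pow_nonneg hs 2),
    mul_nonneg (pow_nonneg ht 2) hs, mul_nonneg ht (pow_nonneg hs 3),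
    mul_nonneg ht (pow_nonneg hs 2), mul_nonneg ht hs]

private lemma ssnn_lB2 (x y : ℝ) (hx : (3:ℝ)/2 < x) :
    0 < 2*x^8 + 8*x^6*y^2 + 2*x^6 + 12*x^4*y^4 + 2*x^4*y^2 + ((-73)/4)*x^4 + 8*x^2*y^6 +
      (-2)*x^2*y^4 + ((-61)/2)*x^2*y^2 + (69/8)*x^2 + 2*y^8 + (-2)*y^6 + ((-73)/4)*y^4 +
      ((-69)/8)*y^2 + ((-135)/128) := by
  have ht : (0:ℝ) < x - 3/2 := by linarith
  have ht' : (0:ℝ) ≤ x - 3/2 := ht.le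
  have hs : (0:ℝ) ≤ y^2 := sq_nonneg y
  linarith [pow_nonneg hs 4, pow_nonneg hs 3,
    pow_nonneg ht' 8, pow_nonneg ht' 7, pow_nonneg ht' 6, pow_nonneg ht' 5, pow_nonneg ht' 4,
    pow_nonneg ht' 3, pow_nonneg ht' 2, ht, hs, pow_nonneg hs 2,
    mul_nonneg (pow_nonneg ht' 6) hs, mul_nonneg (pow_nonneg ht' 5) hs,
    mul_nonneg (pow_nonneg ht' 4) (pow_nonneg hs 2), mul_nonneg (pow_nonneg ht' 4) hs,
    mul_nonneg (pow_nonneg ht' 3) (pow_nonneg hs 2), mul_nonneg (pow_nonneg ht' 3) hs,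
    mul_nonneg (pow_nonneg ht' 2) (pow_nonneg hs 3), mul_nonneg (pow_nonneg ht' 2) (pow_nonneg hs 2),
    mul_nonneg (pow_nonneg ht' 2) hs, mul_nonneg ht' (pow_nonneg hs 3),
    mul_nonneg ht' (pow_nonneg hs 2), mul_nonneg ht' hs]

private lemma ssnn_combine (d0 d1 d2 P0 P1 P2 : ℝ) (h0 : 0 ≤ d0) (h1 : 0 ≤ d1) (h2 : 0 ≤ d2)
    (hsum : 0 < d0 + d1 + d2) (hP0 : 0 < P0) (hP1 : 0 < P1) (hP2 : 0 < P2)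
    (hkey : d0 * P0 + d1 * P1 + d2 * P2 = 0) : False := by
  have hone : 0 < d0 ∨ 0 < d1 ∨ 0 < d2 := by
    by_contra hc
    push_neg at hc
    obtain ⟨c0, c1, c2⟩ := hc
    linarith
  rcases hone with h | h | h
  · nlinarith [mul_pos h hP0, mul_nonneg h1 hP1.le, mul_nonneg h2 hP2.le]
  · nlinarith [mul_pos h hP1, mul_nonneg h0 hP0.le, mul_nonneg h2 hP2.le]
  · nlinarith [mul_pos h hP2, mul_nonneg h0 hP0.le, mul_nonneg h1 hP1.le]

theorem stmt8 (δ : ℕ → ℝ)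
    (hnn : ∀ i ≤ 4, 0 ≤ δ i)
    (hsym : ∀ i ≤ 4, δ i = δ (4 - i))
    (hlead : (∑ i ∈ Finset.range 5, δ i) / (Nat.factorial 4 : ℝ) ≠ 0)
    (α : ℂ)
    (hroot : (∑ i ∈ Finset.range 5, (δ i : ℂ) * cbinom (α + 4 - (i : ℂ)) 4) = 0) :
    -2 ≤ α.re ∧ α.re ≤ 1 := by
  have h31 : δ 3 = δ 1 := (hsym 1 (by norm_num)).symm
  have h40 : δ 4 = δ 0 := (hsym 0 (by norm_num)).symm
  have hd0 : 0 ≤ δ 0 := hnn 0 (by norm_num)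
  have hd1 : 0 ≤ δ 1 := hnn 1 (by norm_num)
  have hd2 : 0 ≤ δ 2 := hnn 2 (by norm_num)
  -- positivity of the sum
  have hsum : 0 < δ 0 + δ 1 + δ 2 := by
    have hne : (∑ i ∈ Finset.range 5, δ i) ≠ 0 := by
      intro h
      exact hlead (by rw [h]; simp)
    simp only [Finset.sum_range_succ, Finset.sum_range_zero] at hne
    rcases lt_or_eq_of_le (by linarith : (0:ℝ) ≤ δ 0 + δ 1 + δ 2) with h | h
    · exact h
    · exfalso; exact hne (by linarith)
  -- turn the root equation into a polynomial equation
  simp only [cbinom, Finset.sum_range_succ, Finset.sum_range_zero, Finset.prod_range_succ,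
    Finset.prod_range_zero, Nat.factorial] at hroot
  push_cast at hroot
  have hE : (δ 0 : ℂ)*(α+4)*(α+3)*(α+2)*(α+1) + (δ 1 : ℂ)*(α+3)*(α+2)*(α+1)*α
      + (δ 2 : ℂ)*(α+2)*(α+1)*α*(α-1) + (δ 1 : ℂ)*(α+1)*α*(α-1)*(α-2)
      + (δ 0 : ℂ)*α*(α-1)*(α-2)*(α-3) = 0 := by
    have h31c : ((δ 3 : ℝ) : ℂ) = ((δ 1 : ℝ) : ℂ) := by rw [h31]
    have h40c : ((δ 4 : ℝ) : ℂ) = ((δ 0 : ℝ) : ℂ) := by rw [h40]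
    linear_combination (24:ℂ) * hroot - ((α+1)*α*(α-1)*(α-2)) * h31c
      - (α*(α-1)*(α-2)*(α-3)) * h40c
  -- substitute real and imaginary parts
  have hα : α = (α.re : ℂ) + (α.im : ℂ) * Complex.I := (Complex.re_add_im α).symm
  set a := α.re with ha
  set b := α.im with hb
  rw [hα] at hE
  have hre := congrArg Complex.re hE
  have him := congrArg Complex.im hE
  simp at hre him
  have hkey : δ 0 * (4*(a+1/2)^8 + 16*(a+1/2)^6*b^2 + 100*(a+1/2)^6 + 24*(a+1/2)^4*b^4 + 100*(a+1/2)^4*b^2 + (647/2)*(a+1/2)^4 + 16*(a+1/2)^2*b^6 + (-100)*(a+1/2)^2*b^4 + 467*(a+1/2)^2*b^2 + (45/4)*(a+1/2)^2 + 4*b^8 + (-100)*b^6 + (647/2)*b^4 + ((-45)/4)*b^2 + ((-1575)/64)) + δ 1 * (4*(a+1/2)^8 + 16*(a+1/2)^6*b^2 + 28*(a+1/2)^6 + 24*(a+1/2)^4*b^4 + 28*(a+1/2)^4*b^2 + (83/2)*(a+1/2)^4 + 16*(a+1/2)^2*b^6 + (-28)*(a+1/2)^2*b^4 + 143*(a+1/2)^2*b^2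 + ((-105)/4)*(a+1/2)^2 + 4*b^8 + (-28)*b^6 + (83/2)*b^4 + (105/4)*b^2 + (225/64)) + δ 2 * (2*(a+1/2)^8 + 8*(a+1/2)^6*b^2 + 2*(a+1/2)^6 + 12*(a+1/2)^4*b^4 + 2*(a+1/2)^4*b^2 + ((-73)/4)*(a+1/2)^4 + 8*(a+1/2)^2*b^6 + (-2)*(a+1/2)^2*b^4 + ((-61)/2)*(a+1/2)^2*b^2 + (69/8)*(a+1/2)^2 + 2*b^8 + (-2)*b^6 + ((-73)/4)*b^4 + ((-69)/8)*b^2 + ((-135)/128)) = 0 := by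
    linear_combination (2*a^4 + 4*a^3 + (-12)*a^2*b^2 + 10*a^2 + (-12)*a*b^2 + 8*a + 2*b^4 + (-10)*b^2) * hre
      + (8*a^3*b + 12*a^2*b + (-8)*a*b^3 + 20*a*b + (-4)*b^3 + 8*b) * him
  constructor
  · by_contra hc
    push_neg at hc
    have hx : (3:ℝ)/2 < -(a+1/2) := by linarith
    have p0 := ssnn_lB0 (-(a+1/2)) b hx.le
    have p1 := ssnn_lB1 (-(a+1/2)) b hx.le
    have p2 := ssnn_lB2 (-(a+1/2)) b hx
    have hkey' : δ 0 * (4*(-(a+1/2))^8 + 16*(-(a+1/2))^6*b^2 + 100*(-(a+1/2))^6 + 24*(-(a+1/2))^4*b^4 + 100*(-(a+1/2))^4*b^2 + (647/2)*(-(a+1/2))^4 + 16*(-(a+1/2))^2*b^6 + (-100)*(-(a+1/2))^2*b^4 + 467*(-(a+1/2))^2*b^2 + (45/4)*(-(a+1/2))^2 + 4*b^8 + (-100)*b^6 + (647/2)*b^4 + ((-45)/4)*b^2 + ((-1575)/64)) + δ 1 * (4*(-(a+1/2))^8 + 16*(-(a+1/2))^6*b^2 + 28*(-(a+1/2))^6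 + 24*(-(a+1/2))^4*b^4 + 28*(-(a+1/2))^4*b^2 + (83/2)*(-(a+1/2))^4 + 16*(-(a+1/2))^2*b^6 + (-28)*(-(a+1/2))^2*b^4 + 143*(-(a+1/2))^2*b^2 + ((-105)/4)*(-(a+1/2))^2 + 4*b^8 + (-28)*b^6 + (83/2)*b^4 + (105/4)*b^2 + (225/64)) + δ 2 * (2*(-(a+1/2))^8 + 8*(-(a+1/2))^6*b^2 + 2*(-(a+1/2))^6 + 12*(-(a+1/2))^4*b^4 + 2*(-(a+1/2))^4*b^2 + ((-73)/4)*(-(a+1/2))^4 + 8*(-(a+1/2))^2*b^6 + (-2)*(-(a+1/2))^2*b^4 + ((-61)/2)*(-(a+1/2))^2*b^2 + (69/8)*(-(a+1/2))^2 + 2*b^8 + (-2)*b^6 + ((-73)/4)*b^4 + ((-69)/8)*b^2 + ((-135)/128)) = 0 := by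
      linear_combination hkey
    exact ssnn_combine _ _ _ _ _ _ hd0 hd1 hd2 hsum p0 p1 p2 hkey'
  · by_contra hc
    push_neg at hc
    have hx : (3:ℝ)/2 < a+1/2 := by linarith
    have p0 := ssnn_lB0 (a+1/2) b hx.le
    have p1 := ssnn_lB1 (a+1/2) b hx.le
    have p2 := ssnn_lB2 (a+1/2) b hx
    exact ssnn_combine _ _ _ _ _ _ hd0 hd1 hd2 hsum p0 p1 p2 hkey
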